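/- Let R ⊆ Gh(I) be a B-ring and let i, j ∈ I be distinct with d(i, j) = 1 (i.e., the integers r(i) − r(j) for r ∈ R have greatest common divisor 1). Then Ext^l_R(ℤ_i, ℤ_j) = 0 for all l ≥ 0. -/

import Mathlib

set_option synthInstance.maxHeartbeats 400000
set_option maxHeartbeats 1000000

noncomputable section

open CategoryTheory

/-- A subring `R ⊆ Gh I = ∏_{i ∈ I} ℤ` is a *B-ring* if for all distinct `i, j ∈ I`
there is `r ∈ R` with `r i ≠ 0` and `r j = 0`. -/
def IsBRing {I : Type*} (R : Subring (I → ℤ)) : Prop :=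
  ∀ i j : I, i ≠ j → ∃ r ∈ R, r i ≠ 0 ∧ r j = 0

/-- `ℤ_i`: the `R`-module `ℤ` where `r ∈ R ⊆ ∏_{i ∈ I} ℤ` acts by multiplication by `r i`. -/
def ZInt {I : Type} (R : Subring (I → ℤ)) (i : I) : ModuleCat R :=
  letI : Module R ℤ := Module.compHom ℤ ((Pi.evalRingHom (fun _ => ℤ) i).comp R.subtype)
  ModuleCat.of R ℤ

section Aux

variable {C : Type*} [Category C] [Preadditive C] (A : Type*) [Ring A] [Linear A C]

lemma aux_leftComp_comp {X X' X'' Z : C} (a : X' ⟶ X) (b : X'' ⟶ X') :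
    ModuleCat.ofHom (Linear.leftComp A Z a) ≫ ModuleCat.ofHom (Linear.leftComp A Z b) =
      ModuleCat.ofHom (Linear.leftComp A Z (b ≫ a)) := by
  apply ModuleCat.hom_ext
  apply LinearMap.ext
  intro g
  show Linear.leftComp A Z b (Linear.leftComp A Z a g) = Linear.leftComp A Z (b ≫ a) g
  simp [Linear.leftComp_apply]

lemma aux_leftComp_add {X X' Z : C} (a b : X' ⟶ X) :
    ModuleCat.ofHom (Linear.leftComp A Z (a + b)) =
      ModuleCat.ofHom (Linear.leftComp A Z a) + ModuleCat.ofHom (Linear.leftComp A Z b) := by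
  apply ModuleCat.hom_ext
  apply LinearMap.ext
  intro g
  show Linear.leftComp A Z (a + b) g = Linear.leftComp A Z a g + Linear.leftComp A Z b g
  simp [Linear.leftComp_apply, Preadditive.add_comp]

lemma aux_leftComp_id {X Z : C} :
    𝟙 (ModuleCat.of A (X ⟶ Z)) = ModuleCat.ofHom (Linear.leftComp A Z (𝟙 X)) := by
  apply ModuleCat.hom_ext
  apply LinearMap.ext
  intro g
  show g = Linear.leftComp A Z (𝟙 X) g
  simp [Linear.leftComp_apply]

lemma aux_leftComp_zero {X X' Z : C} (a : X' ⟶ X) (h : ∀ g : X ⟶ Z, a ≫ g = 0) :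
    ModuleCat.ofHom (Linear.leftComp A Z a) =
      (0 : ModuleCat.of A (X ⟶ Z) ⟶ ModuleCat.of A (X' ⟶ Z)) := by
  apply ModuleCat.hom_ext
  apply LinearMap.ext
  intro g
  show Linear.leftComp A Z a g = 0
  rw [Linear.leftComp_apply]
  exact h g

/-- transporting `s • 𝟙 = 𝟙` along an isomorphism -/
lemma smul_id_of_iso (s : A) {X Y : C} (ι : X ≅ Y) (h : s • 𝟙 X = 𝟙 X) : s • 𝟙 Y = 𝟙 Y := by
  have := congrArg (fun f => ι.inv ≫ f ≫ ι.hom) h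
  simpa [Linear.comp_smul, Linear.smul_comp] using this

end Aux

lemma ZInt.smul_id_eq_id {I : Type} (R : Subring (I → ℤ)) (i : I) (s : R)
    (hs : (s : I → ℤ) i = 1) : s • (𝟙 (ZInt R i)) = 𝟙 (ZInt R i) := by
  apply ModuleCat.hom_ext
  apply LinearMap.ext
  intro n
  show ((s : I → ℤ) i) • n = n
  rw [hs, one_smul]

lemma ZInt.smul_id_eq_zero {I : Type} (R : Subring (I → ℤ)) (i : I) (s : R)
    (hs : (s : I → ℤ) i = 0) : s • (𝟙 (ZInt R i)) = 0 := by
  apply ModuleCat.hom_ext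
  apply LinearMap.ext
  intro n
  show ((s : I → ℤ) i) • n = (0 : ZInt R i)
  rw [hs, zero_smul]

/-- Let `R ⊆ Gh(I)` be a B-ring and `i ≠ j` in `I` with `d(i, j) = 1`, i.e. the only positive
integer dividing all the integers `r i - r j` for `r ∈ R` is `1`.  Then
`Ext^l_R(ℤ_i, ℤ_j) = 0` for all `l ≥ 0`. -/
theorem stmt_10 (I : Type) [Fintype I] (R : Subring (I → ℤ)) (hR : IsBRing R)
    (i j : I) (hij : i ≠ j)
    (hd : ∀ e : ℕ, 0 < e → (∀ r ∈ R, (e : ℤ) ∣ (r i - r j)) → e = 1)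
    (l : ℕ) :
    Subsingleton (((Ext ℤ (ModuleCat R) l).obj (Opposite.op (ZInt R i))).obj (ZInt R j)) := by
  classical
  -- Step 1: find `e ∈ R` with `e i = 1`, `e j = 0`.
  obtain ⟨e, he, hei, hej⟩ : ∃ e ∈ R, e i = 1 ∧ e j = 0 := by
    have h1 : ∃ r ∈ R, r i - r j = 1 := by
      set S : AddSubgroup ℤ :=
        { carrier := {d : ℤ | ∃ r ∈ R, r i - r j = d}
          zero_mem' := ⟨0, R.zero_mem, by simp⟩
          add_mem' := by
            rintro a b ⟨r, hr, rfl⟩ ⟨s, hs, rfl⟩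
            exact ⟨r + s, R.add_mem hr hs, by simp; ring⟩
          neg_mem' := by
            rintro a ⟨r, hr, rfl⟩
            exact ⟨-r, R.neg_mem hr, by simp; ring⟩ } with hS
      obtain ⟨g, hg⟩ := Int.subgroup_cyclic S
      have hdvd : ∀ d ∈ S, g ∣ d := by
        intro d hd
        rw [hg, AddSubgroup.mem_closure_singleton] at hd
        obtain ⟨n, rfl⟩ := hd
        exact Dvd.intro_left n rfl
      have hgne : g ≠ 0 := by
        obtain ⟨r, hr, hri, hrj⟩ := hR i j hij
        have hmem : r i - r j ∈ S := ⟨r, hr, rfl⟩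
        intro h0
        have := hdvd _ hmem
        rw [h0] at this
        simp at this
        omega
      have hnat : g.natAbs = 1 := by
        apply hd _ (Int.natAbs_pos.mpr hgne)
        intro r hr
        exact Int.natAbs_dvd.mpr (hdvd _ (⟨r, hr, rfl⟩ : r i - r j ∈ S))
      have hgmem : g ∈ S := by rw [hg]; exact AddSubgroup.mem_closure_singleton_self g
      obtain ⟨r, hr, hrd⟩ := hgmem
      rcases Int.natAbs_eq_iff.mp hnat with h | h
      · exact ⟨r, hr, by omega⟩
      · exact ⟨-r, R.neg_mem hr, by simp only [Pi.neg_apply]; omega⟩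
    obtain ⟨r, hr, hrij⟩ := h1
    refine ⟨r - (r j) • (1 : I → ℤ), R.sub_mem hr (R.zsmul_mem R.one_mem _), ?_, ?_⟩ <;>
      simp <;> omega
  set ε : R := ⟨e, he⟩ with hε
  set X := ZInt R i with hX
  set Y := ZInt R j with hY
  have hA : ε • 𝟙 X = 𝟙 X := ZInt.smul_id_eq_id R i ε hei
  have hB : ε • 𝟙 Y = 0 := ZInt.smul_id_eq_zero R j ε hej
  -- Step 2: projective resolution, scaling chain map, homotopy with identity.
  set P := projectiveResolution X with hP
  set φ : P.complex ⟶ P.complex :=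
    { f := fun n => ε • 𝟙 (P.complex.X n)
      comm' := by
        intro n m _
        rw [Linear.smul_comp, Linear.comp_smul, Category.id_comp, Category.comp_id] } with hφ
  have hcomm : φ ≫ P.π = P.π ≫ (ChainComplex.single₀ (ModuleCat R)).map (𝟙 X) := by
    rw [CategoryTheory.Functor.map_id, Category.comp_id]
    apply HomologicalComplex.hom_ext
    intro n
    obtain _ | n := n
    · have h0 : ε • 𝟙 (((ChainComplex.single₀ (ModuleCat R)).obj X).X 0) =
          𝟙 (((ChainComplex.single₀ (ModuleCat R)).obj X).X 0) :=
        smul_id_of_iso _ ε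
          (HomologicalComplex.singleObjXSelf (ComplexShape.down ℕ) 0 X).symm hA
      show (ε • 𝟙 (P.complex.X 0)) ≫ P.π.f 0 = P.π.f 0
      rw [Linear.smul_comp, Category.id_comp, ← Category.comp_id (P.π.f 0),
        ← Linear.comp_smul, h0, Category.comp_id]
    · apply (HomologicalComplex.isZero_single_obj_X
        (ComplexShape.down ℕ) 0 X (n + 1) (by simp)).eq_of_tgt
  have β : Homotopy (𝟙 P.complex) φ :=
    ProjectiveResolution.liftHomotopy (𝟙 X) (𝟙 P.complex) φ (by simp) hcomm
  -- Step 3: the Hom complex and a null-homotopy of its identity.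
  have hzero : ∀ (n : ℕ) (f : P.complex.X n ⟶ Y), φ.f n ≫ f = 0 := by
    intro n f
    show (ε • 𝟙 (P.complex.X n)) ≫ f = 0
    rw [Linear.smul_comp, Category.id_comp, ← Category.comp_id f, ← Linear.comp_smul,
      hB, Limits.comp_zero]
  have G : Homotopy (𝟙 (P.complex.linearYonedaObj ℤ Y)) 0 :=
    { hom := fun a b => ModuleCat.ofHom (Linear.leftComp ℤ Y (β.hom b a))
      zero := by
        intro a b hab
        have hb : β.hom b a = 0 := β.zero b a (by simpa using hab)
        show ModuleCat.ofHom (Linear.leftComp ℤ Y (β.hom b a)) = 0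
        rw [hb]
        exact aux_leftComp_zero ℤ 0 (fun g => Limits.zero_comp)
      comm := by
        intro n
        have hc := β.comm n
        rw [dNext_nat, prevD_eq _ (by simp : (ComplexShape.down ℕ).Rel (n+1) n),
          HomologicalComplex.id_f] at hc
        erw [dNext_eq _ (by simp : (ComplexShape.up ℕ).Rel n (n+1)), prevD_nat,
          HomologicalComplex.id_f, HomologicalComplex.zero_f, add_zero]
        simp only [ChainComplex.linearYonedaObj_d, ChainComplex.linearYonedaObj_X]
        show 𝟙 (ModuleCat.of ℤ (P.complex.X n ⟶ Y)) =
          ModuleCat.ofHom (Linear.leftComp ℤ Y (P.complex.d (n + 1) n)) ≫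
              ModuleCat.ofHom (Linear.leftComp ℤ Y (β.hom n (n + 1))) +
            ModuleCat.ofHom (Linear.leftComp ℤ Y (β.hom (n - 1) n)) ≫
              ModuleCat.ofHom (Linear.leftComp ℤ Y (P.complex.d n (n - 1)))
        rw [aux_leftComp_id ℤ, aux_leftComp_comp, aux_leftComp_comp, hc,
          aux_leftComp_add, aux_leftComp_add, aux_leftComp_zero ℤ (φ.f n) (hzero n),
          add_zero, add_comm]
      }
  -- Step 4: homology of `K` vanishes, transport along `isoExt`.
  have hzK : Limits.IsZero ((P.complex.linearYonedaObj ℤ Y).homology l) := by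
    rw [Limits.IsZero.iff_id_eq_zero]
    have := G.homologyMap_eq l
    simpa using this
  have hzE : Limits.IsZero (((Ext ℤ (ModuleCat R) l).obj (Opposite.op X)).obj Y) :=
    hzK.of_iso (P.isoExt l Y)
  have ι := hzE.iso (ModuleCat.isZero_of_subsingleton (ModuleCat.of ℤ PUnit))
  have : Subsingleton ((forget (ModuleCat ℤ)).obj (ModuleCat.of ℤ PUnit)) := by
    show Subsingleton PUnit; infer_instance
  exact Equiv.subsingleton ((forget (ModuleCat ℤ)).mapIso ι).toEquiv
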